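/- Let P ∈ Ã and k ≥ 2 such that CHSH(P^{⊠(k−1)}) ≥ CHSH(P), where P^{⊠k} denotes the left-nested product (((P⊠P)⊠P)⋯)⊠P with k factors. Assume inductively that P^{⊠k} maximizes CHSH over the tilted k-orbit Õ^(k)(P). Then for every Q ∈ Õ^(k)(P), both CHSH(P^{⊠(k+1)}) ≥ CHSH(Q⊠P) and CHSH(P^{⊠(k+1)}) ≥ CHSH(P⊠Q) hold; consequently P^{⊠(k+1)} maximizes CHSH over Õ^(k+1)(P). -/

import Mathlib

noncomputable def bmul (A B : ℝ × ℝ × ℝ) : ℝ × ℝ × ℝ :=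
  (A.1 * B.1 + A.1 * B.2.1 + (1/2) * A.2.1 * B.1 + (1/4) * A.2.2 * B.1,
   (1/2) * A.2.1 * B.1 + A.2.1 * B.2.1 - (1/4) * A.2.2 * B.1,
   A.1 * B.2.2 + A.2.1 * B.2.2 + A.2.2 * B.1 + A.2.2 * B.2.1 + A.2.2 * B.2.2)

noncomputable def CHSH (A : ℝ × ℝ × ℝ) : ℝ := A.1 + (3/4) * A.2.1 + (1/2) * A.2.2

inductive TOrbit (P : ℝ × ℝ × ℝ) : ℕ → (ℝ × ℝ × ℝ) → Prop
  | base : TOrbit P 1 P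
  | left {k : ℕ} {Q : ℝ × ℝ × ℝ} : TOrbit P k Q → TOrbit P (k + 1) (bmul P Q)
  | right {k : ℕ} {Q : ℝ × ℝ × ℝ} : TOrbit P k Q → TOrbit P (k + 1) (bmul Q P)

noncomputable def leftPow (P : ℝ × ℝ × ℝ) : ℕ → ℝ × ℝ × ℝ
  | 0 => P
  | 1 => P
  | (k + 1) => bmul (leftPow P k) P

lemma leftPow_succ (P : ℝ × ℝ × ℝ) (j : ℕ) :
    leftPow P (j + 2) = bmul (leftPow P (j + 1)) P := rfl

lemma leftPow_mem (P : ℝ × ℝ × ℝ) : ∀ k : ℕ, 1 ≤ k → TOrbit P k (leftPow P k) := by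
  intro k hk
  induction k with
  | zero => omega
  | succ n ih =>
    rcases Nat.eq_or_lt_of_le hk with h | h
    · have : n = 0 := by omega
      subst this
      exact TOrbit.base
    · have hn : 1 ≤ n := by omega
      obtain ⟨m, rfl⟩ : ∃ m, n = m + 1 := ⟨n - 1, by omega⟩
      rw [leftPow_succ]
      exact TOrbit.right (ih hn)

lemma orbit_facts (P : ℝ × ℝ × ℝ) (hPsum : P.1 + P.2.1 + P.2.2 = 1) :
    ∀ {k : ℕ} {Q : ℝ × ℝ × ℝ}, TOrbit P k Q →
      Q.1 + Q.2.1 + Q.2.2 = 1 ∧ 1 - Q.2.2 = (1 - P.2.2) ^ k := by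
  intro k Q h
  induction h with
  | base => exact ⟨hPsum, by rw [pow_one]⟩
  | @left k Q h ih =>
    obtain ⟨hs, h3⟩ := ih
    constructor
    · simp only [bmul]
      linear_combination (P.1 + P.2.1 + P.2.2) * hs + hPsum
    · have : 1 - (bmul P Q).2.2 = (1 - P.2.2) * (1 - Q.2.2) := by
        simp only [bmul]
        linear_combination (-Q.2.2) * hPsum + (-P.2.2) * hs
      rw [this, h3, pow_succ]
      ring
  | @right k Q h ih =>
    obtain ⟨hs, h3⟩ := ih
    constructor
    · simp only [bmul]
      linear_combination (Q.1 + Q.2.1 + Q.2.2) * hPsum + hs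
    · have : 1 - (bmul Q P).2.2 = (1 - Q.2.2) * (1 - P.2.2) := by
        simp only [bmul]
        linear_combination (-P.2.2) * hs + (-Q.2.2) * hPsum
      rw [this, h3, pow_succ]

/-- Lemma (i), left version, in coordinates. -/
lemma mono_left (p1 p3 q1 q3 r1 : ℝ) (hp1 : 0 ≤ p1) (hp2 : 0 ≤ 1 - p1 - p3)
    (hd : r1 ≤ q1) :
    CHSH (bmul (r1, 1 - r1 - q3, q3) (p1, 1 - p1 - p3, p3)) ≤
      CHSH (bmul (q1, 1 - q1 - q3, q3) (p1, 1 - p1 - p3, p3)) := by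
  simp only [CHSH, bmul]
  nlinarith [mul_nonneg (sub_nonneg.2 hd) hp1, mul_nonneg (sub_nonneg.2 hd) hp2]

/-- Lemma (i), right version, in coordinates. -/
lemma mono_right (p1 p3 q1 q3 r1 : ℝ) (hp3 : 0 ≤ p3) (hp2 : 0 ≤ 1 - p1 - p3)
    (hd : r1 ≤ q1) :
    CHSH (bmul (p1, 1 - p1 - p3, p3) (r1, 1 - r1 - q3, q3)) ≤
      CHSH (bmul (p1, 1 - p1 - p3, p3) (q1, 1 - q1 - q3, q3)) := by
  simp only [CHSH, bmul]
  nlinarith [mul_nonneg (sub_nonneg.2 hd) hp3, mul_nonneg (sub_nonneg.2 hd) hp2]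

/-- The key inequality: CHSH((M⊠P)⊠P) ≥ CHSH(P⊠(M⊠P)) whenever CHSH(M) ≥ CHSH(P). -/
lemma key (p1 p3 m1 s : ℝ) (hp1 : 0 ≤ p1) (hp2 : 0 ≤ 1 - p1 - p3) (hp3 : 0 ≤ p3)
    (hc : p3 ≤ p1) (hs : p3 ≤ s) (hm : p1 - p3 + s ≤ m1) :
    CHSH (bmul (p1, 1 - p1 - p3, p3) (bmul (m1, 1 - m1 - s, s) (p1, 1 - p1 - p3, p3))) ≤
      CHSH (bmul (bmul (m1, 1 - m1 - s, s) (p1, 1 - p1 - p3, p3)) (p1, 1 - p1 - p3, p3)) := by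
  have hcnn : 0 ≤ ((1 - p1 - p3) + p1 / 2) * (2 - 3 * p3) :=
    mul_nonneg (by linarith) (by linarith)
  have h1 : 0 ≤ (m1 - (p1 - p3 + s)) * (((1 - p1 - p3) + p1 / 2) * (2 - 3 * p3)) :=
    mul_nonneg (by linarith) hcnn
  have h2 : 0 ≤ (s - p3) *
      (((1 - p1 - p3) + p1 / 2) * (2 - 3 * p3) + p1 * (5/2 - (9/4) * p3)) :=
    mul_nonneg (by linarith) (add_nonneg hcnn (mul_nonneg hp1 (by linarith)))
  have h3 : 0 ≤ p1 * ((1 - p1 - p3) + (3/4) * p3 ^ 2 + (3/2) * p1 * p3) :=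
    mul_nonneg hp1 (by nlinarith [sq_nonneg p3, mul_nonneg hp1 hp3])
  simp only [CHSH, bmul]
  nlinarith [h1, h2, h3]

theorem stmt12 (P : ℝ × ℝ × ℝ)
    (hP1 : 0 ≤ P.1) (hP2 : 0 ≤ P.2.1) (hP3 : 0 ≤ P.2.2)
    (hPsum : P.1 + P.2.1 + P.2.2 = 1) (hPchsh : 3/4 ≤ CHSH P)
    (k : ℕ) (hk : 2 ≤ k)
    (hdistill : CHSH (leftPow P (k - 1)) ≥ CHSH P)
    (hmax : ∀ Q : ℝ × ℝ × ℝ, TOrbit P k Q → CHSH (leftPow P k) ≥ CHSH Q) :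
    (∀ Q : ℝ × ℝ × ℝ, TOrbit P k Q →
      CHSH (leftPow P (k + 1)) ≥ CHSH (bmul Q P) ∧
      CHSH (leftPow P (k + 1)) ≥ CHSH (bmul P Q)) ∧
    (∀ Q : ℝ × ℝ × ℝ, TOrbit P (k + 1) Q → CHSH (leftPow P (k + 1)) ≥ CHSH Q) := by
  obtain ⟨j, rfl⟩ : ∃ j, k = j + 2 := ⟨k - 2, by omega⟩
  obtain ⟨p1, p2, p3⟩ := P
  have hp2 : p2 = 1 - p1 - p3 := by linarith
  subst hp2
  have hc : p3 ≤ p1 := by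
    simp only [CHSH] at hPchsh; linarith
  set Pt : ℝ × ℝ × ℝ := (p1, 1 - p1 - p3, p3) with hPt
  -- basic objects
  have hLdef : leftPow Pt (j + 2) = bmul (leftPow Pt (j + 1)) Pt := rfl
  have hLP : leftPow Pt (j + 2 + 1) = bmul (leftPow Pt (j + 2)) Pt := rfl
  set M : ℝ × ℝ × ℝ := leftPow Pt (j + 1) with hM
  set L : ℝ × ℝ × ℝ := leftPow Pt (j + 2) with hL
  have hMorb : TOrbit Pt (j + 1) M := leftPow_mem Pt (j + 1) (by omega)
  have hLorb : TOrbit Pt (j + 2) L := leftPow_mem Pt (j + 2) (by omega)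
  have hPtsum : Pt.1 + Pt.2.1 + Pt.2.2 = 1 := by show p1 + (1 - p1 - p3) + p3 = 1; ring
  obtain ⟨hMsum, hM3⟩ := orbit_facts Pt hPtsum hMorb
  obtain ⟨hLsum, hL3⟩ := orbit_facts Pt hPtsum hLorb
  have hPt3 : Pt.2.2 = p3 := rfl
  have hPt1 : Pt.1 = p1 := rfl
  -- M has third coordinate ≥ p3
  have hs : p3 ≤ M.2.2 := by
    have h1 : (1 - p3) ^ (j + 1) ≤ (1 - p3) ^ 1 :=
      pow_le_pow_of_le_one (by linarith) (by linarith) (by omega)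
    rw [pow_one] at h1
    rw [hPt3] at hM3
    linarith
  -- CHSH M ≥ CHSH P gives the first-coordinate bound
  have hm : p1 - p3 + M.2.2 ≤ M.1 := by
    have hd := hdistill
    rw [show j + 2 - 1 = j + 1 from rfl] at hd
    rw [← hM] at hd
    simp only [CHSH, hPt] at hd
    linarith
  -- eta-expansions
  have hMe : (M.1, 1 - M.1 - M.2.2, M.2.2) = M := by
    rw [show (1 : ℝ) - M.1 - M.2.2 = M.2.1 by linarith]
  have hLe : (L.1, 1 - L.1 - L.2.2, L.2.2) = L := by
    rw [show (1 : ℝ) - L.1 - L.2.2 = L.2.1 by linarith]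
  -- key inequality : CHSH (Pt ⊠ L) ≤ CHSH (L ⊠ Pt)
  have hkey : CHSH (bmul Pt L) ≤ CHSH (bmul L Pt) := by
    have := key p1 p3 M.1 M.2.2 hP1 hP2 hP3 hc hs hm
    rw [hMe] at this
    rw [hLdef]
    exact this
  -- main part
  have hpart : ∀ Q : ℝ × ℝ × ℝ, TOrbit Pt (j + 2) Q →
      CHSH (leftPow Pt (j + 2 + 1)) ≥ CHSH (bmul Q Pt) ∧
      CHSH (leftPow Pt (j + 2 + 1)) ≥ CHSH (bmul Pt Q) := by
    intro Q hQ
    obtain ⟨hQsum, hQ3⟩ := orbit_facts Pt hPtsum hQ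
    have hq3 : Q.2.2 = L.2.2 := by
      have : 1 - Q.2.2 = 1 - L.2.2 := by rw [hQ3, hL3]
      linarith
    have hmaxQ : CHSH Q ≤ CHSH L := hmax Q hQ
    have hd : Q.1 ≤ L.1 := by
      simp only [CHSH] at hmaxQ; linarith
    have hQe : (Q.1, 1 - Q.1 - L.2.2, L.2.2) = Q := by
      rw [← hq3, show (1 : ℝ) - Q.1 - Q.2.2 = Q.2.1 by linarith]
    rw [hLP]
    constructor
    · have := mono_left p1 p3 L.1 L.2.2 Q.1 hP1 hP2 hd
      rw [hQe, hLe] at this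
      exact this
    · have := mono_right p1 p3 L.1 L.2.2 Q.1 hP3 hP2 hd
      rw [hQe, hLe] at this
      exact le_trans this hkey
  refine ⟨hpart, ?_⟩
  intro Q hQ
  cases hQ with
  | left h => exact (hpart _ h).2
  | right h => exact (hpart _ h).1
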